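/- Let d ≥ 1 be an integer, let 1 < p₀ ≤ p₁ and s₀, s₁, w₀, w₁ ∈ ℝ, and write ω^{(i)} := ω_m^j(p_i, s_i, w_i). Then the following are equivalent: (i) every real family (μ_{j,m})_{(j,m) ∈ (ℕ∪{0}) × ℤ^d} for which Σ_{j,m} |ω^{(0)} μ_{j,m}|^{p₀} < ∞ also satisfies Σ_{j,m} |ω^{(1)} μ_{j,m}|^{p₁} < ∞; (ii) s₀ − s₁ ≥ d(1/p₀ − 1/p₁) and w₀ ≥ w₁. Moreover, when these hold there exists a constant C > 0 such that (Σ_{j,m} |ω^{(1)} μ_{j,m}|^{p₁})^{1/p₁} ≤ C · (Σ_{j,m} |ω^{(0)} μ_{j,m}|^{p₀})^{1/p₀} for every family (μ_{j,m}). -/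

import Mathlib

open scoped ENNReal

/-- The weighted Besov wavelet weight `ω_m^j(p,s,w) = 2^{j(s - d/p + d/2)} (1 + 2^{-2j}|m|²)^{w/2}`. -/
noncomputable def besovWeight (d : ℕ) (p s w : ℝ) (j : ℕ) (m : Fin d → ℤ) : ℝ :=
  (2 : ℝ) ^ ((j : ℝ) * (s - (d : ℝ) / p + (d : ℝ) / 2)) *
    (1 + (2 : ℝ) ^ (-(2 * (j : ℝ))) * ∑ i, ((m i : ℝ)) ^ 2) ^ (w / 2)

lemma besovWeight_pos (d : ℕ) (p s w : ℝ) (j : ℕ) (m : Fin d → ℤ) :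
    0 < besovWeight d p s w j m := by
  unfold besovWeight
  have h2 : (0:ℝ) < 1 + (2:ℝ) ^ (-(2*(j:ℝ))) * ∑ i, ((m i : ℝ))^2 := by positivity
  exact mul_pos (Real.rpow_pos_of_pos two_pos _) (Real.rpow_pos_of_pos h2 _)

lemma besovWeight_mono (d : ℕ) (p₀ p₁ s₀ s₁ w₀ w₁ : ℝ) (hp₀ : 0 < p₀) (hp₁ : 0 < p₁)
    (hs : (d : ℝ) * (1 / p₀ - 1 / p₁) ≤ s₀ - s₁) (hw : w₁ ≤ w₀) (j : ℕ) (m : Fin d → ℤ) :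
    besovWeight d p₁ s₁ w₁ j m ≤ besovWeight d p₀ s₀ w₀ j m := by
  unfold besovWeight
  have hB : (1:ℝ) ≤ 1 + (2:ℝ) ^ (-(2*(j:ℝ))) * ∑ i, ((m i : ℝ))^2 := by
    have : (0:ℝ) ≤ (2:ℝ) ^ (-(2*(j:ℝ))) * ∑ i, ((m i : ℝ))^2 := by positivity
    linarith
  have ha : s₁ - (d:ℝ)/p₁ + (d:ℝ)/2 ≤ s₀ - (d:ℝ)/p₀ + (d:ℝ)/2 := by
    have e0 : (d:ℝ)/p₀ = (d:ℝ) * (1/p₀) := by ring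
    have e1 : (d:ℝ)/p₁ = (d:ℝ) * (1/p₁) := by ring
    rw [e0, e1]; nlinarith [hs]
  have h1 : (2:ℝ) ^ ((j:ℝ) * (s₁ - (d:ℝ)/p₁ + (d:ℝ)/2)) ≤
      (2:ℝ) ^ ((j:ℝ) * (s₀ - (d:ℝ)/p₀ + (d:ℝ)/2)) :=
    Real.rpow_le_rpow_of_exponent_le one_le_two
      (mul_le_mul_of_nonneg_left ha (Nat.cast_nonneg j))
  have h2 : (1 + (2:ℝ) ^ (-(2*(j:ℝ))) * ∑ i, ((m i : ℝ))^2) ^ (w₁/2) ≤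
      (1 + (2:ℝ) ^ (-(2*(j:ℝ))) * ∑ i, ((m i : ℝ))^2) ^ (w₀/2) :=
    Real.rpow_le_rpow_of_exponent_le hB (by linarith)
  have hp1 : (0:ℝ) ≤ (2:ℝ) ^ ((j:ℝ) * (s₀ - (d:ℝ)/p₀ + (d:ℝ)/2)) :=
    (Real.rpow_pos_of_pos two_pos _).le
  have hp2 : (0:ℝ) ≤ (1 + (2:ℝ) ^ (-(2*(j:ℝ))) * ∑ i, ((m i : ℝ))^2) ^ (w₀/2) :=
    (Real.rpow_pos_of_pos (by linarith) _).le
  exact mul_le_mul h1 h2 (Real.rpow_pos_of_pos (by linarith) _).le hp1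

lemma besovWeight_zero (d : ℕ) (p s w : ℝ) (j : ℕ) :
    besovWeight d p s w j 0 = (2:ℝ) ^ ((j:ℝ) * (s - (d:ℝ)/p + (d:ℝ)/2)) := by
  unfold besovWeight
  simp [Real.one_rpow]

lemma besovWeight_single (d : ℕ) (hd : 1 ≤ d) (p s w : ℝ) (k : ℕ) :
    besovWeight d p s w 0 (Pi.single (⟨0, hd⟩ : Fin d) ((2:ℤ)^k)) =
      (1 + ((2:ℝ)^k)^2) ^ (w/2) := by
  unfold besovWeight
  have hsum : (∑ i, (((Pi.single (⟨0, hd⟩ : Fin d) ((2:ℤ)^k) : Fin d → ℤ) i : ℝ))^2)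
      = ((2:ℝ)^k)^2 := by
    rw [Finset.sum_eq_single (⟨0, hd⟩ : Fin d)]
    · simp
    · intro b _ hb; simp [Pi.single_apply, hb]
    · simp
  rw [hsum]
  norm_num

lemma lp_mono_ennreal {ι : Type*} (a : ι → ℝ≥0∞) (p₀ p₁ : ℝ) (hp₀ : 0 < p₀) (hp : p₀ ≤ p₁) :
    (∑' x, a x ^ p₁) ^ (1/p₁) ≤ (∑' x, a x ^ p₀) ^ (1/p₀) := by
  have hp₁ : 0 < p₁ := lt_of_lt_of_le hp₀ hp
  set S := ∑' x, a x ^ p₀ with hS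
  have hx : ∀ x, a x ^ p₁ ≤ a x ^ p₀ * S ^ ((p₁ - p₀)/p₀) := by
    intro x
    have hle : a x ≤ S ^ (1/p₀) := by
      have h1 : a x ^ p₀ ≤ S := ENNReal.le_tsum x
      calc a x = (a x ^ p₀) ^ (1/p₀) := by
            rw [← ENNReal.rpow_mul, mul_one_div, div_self hp₀.ne', ENNReal.rpow_one]
        _ ≤ S ^ (1/p₀) := ENNReal.rpow_le_rpow h1 (by positivity)
    calc a x ^ p₁ = a x ^ p₀ * a x ^ (p₁ - p₀) := by
          rw [← ENNReal.rpow_add_of_nonneg _ _ hp₀.le (sub_nonneg.2 hp), add_sub_cancel]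
      _ ≤ a x ^ p₀ * (S ^ (1/p₀)) ^ (p₁ - p₀) :=
          mul_le_mul_right (ENNReal.rpow_le_rpow hle (sub_nonneg.2 hp)) _
      _ = a x ^ p₀ * S ^ ((p₁ - p₀)/p₀) := by
          rw [← ENNReal.rpow_mul]; congr 1; ring
  have hsum : ∑' x, a x ^ p₁ ≤ S ^ (p₁/p₀) := by
    calc ∑' x, a x ^ p₁ ≤ ∑' x, a x ^ p₀ * S ^ ((p₁ - p₀)/p₀) := ENNReal.tsum_le_tsum hx
      _ = S * S ^ ((p₁ - p₀)/p₀) := ENNReal.tsum_mul_right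
      _ = S ^ (1:ℝ) * S ^ ((p₁ - p₀)/p₀) := by rw [ENNReal.rpow_one]
      _ = S ^ (1 + (p₁ - p₀)/p₀) :=
          (ENNReal.rpow_add_of_nonneg _ _ zero_le_one (div_nonneg (sub_nonneg.2 hp) hp₀.le)).symm
      _ = S ^ (p₁/p₀) := by congr 1; field_simp; ring
  calc (∑' x, a x ^ p₁) ^ (1/p₁) ≤ (S ^ (p₁/p₀)) ^ (1/p₁) :=
        ENNReal.rpow_le_rpow hsum (by positivity)
    _ = S ^ (1/p₀) := by
        rw [← ENNReal.rpow_mul]; congr 1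
        field_simp

lemma not_summable_of_one_le (f : ℕ → ℝ) (h : ∀ k, 1 ≤ f k) : ¬ Summable f := by
  intro hs
  have h0 := hs.tendsto_atTop_zero
  have : ∀ᶠ k in Filter.atTop, f k < 1 := by
    have := h0.eventually (gt_mem_nhds (show (0:ℝ) < 1 by norm_num))
    exact this
  obtain ⟨k, hk⟩ := this.exists
  linarith [h k]

lemma besov_transfer (d : ℕ) (p₀ p₁ s₀ s₁ w₀ w₁ : ℝ) (hp₀ : 0 < p₀)
    (H : ∀ μ : ℕ × (Fin d → ℤ) → ℝ,
        Summable (fun x => |besovWeight d p₀ s₀ w₀ x.1 x.2 * μ x| ^ p₀) →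
        Summable (fun x => |besovWeight d p₁ s₁ w₁ x.1 x.2 * μ x| ^ p₁))
    (ι : ℕ → ℕ × (Fin d → ℤ)) (hι : Function.Injective ι) (g : ℕ → ℝ)
    (hs : Summable (fun k => |besovWeight d p₀ s₀ w₀ (ι k).1 (ι k).2 * g k| ^ p₀)) :
    Summable (fun k => |besovWeight d p₁ s₁ w₁ (ι k).1 (ι k).2 * g k| ^ p₁) := by
  set μ := Function.extend ι g 0 with hμ
  have hcomp : ∀ k, μ (ι k) = g k := fun k => hι.extend_apply g 0 k
  have hout : ∀ x ∉ Set.range ι, |besovWeight d p₀ s₀ w₀ x.1 x.2 * μ x| ^ p₀ = 0 := by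
    intro x hx
    have hμx : μ x = 0 := by
      rw [hμ, Function.extend_apply' g (0 : ℕ × (Fin d → ℤ) → ℝ) x (by simpa [Set.range] using hx)]
      rfl
    rw [hμx, mul_zero, abs_zero, Real.zero_rpow hp₀.ne']
  have h0 : Summable (fun x => |besovWeight d p₀ s₀ w₀ x.1 x.2 * μ x| ^ p₀) := by
    rw [← hι.summable_iff hout]
    refine hs.congr fun k => ?_
    simp [Function.comp, hcomp k]
  have h1 := (H μ h0).comp_injective hι
  refine h1.congr fun k => ?_
  simp [Function.comp, hcomp k]

lemma besov_counter_s (d : ℕ) (p₀ p₁ s₀ s₁ w₀ w₁ : ℝ) (hp₀ : 0 < p₀) (hp₁ : 0 < p₁)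
    (ha : s₀ - (d:ℝ)/p₀ + (d:ℝ)/2 < s₁ - (d:ℝ)/p₁ + (d:ℝ)/2)
    (H : ∀ μ : ℕ × (Fin d → ℤ) → ℝ,
        Summable (fun x => |besovWeight d p₀ s₀ w₀ x.1 x.2 * μ x| ^ p₀) →
        Summable (fun x => |besovWeight d p₁ s₁ w₁ x.1 x.2 * μ x| ^ p₁)) : False := by
  set a₀ := s₀ - (d:ℝ)/p₀ + (d:ℝ)/2 with ha₀
  set a₁ := s₁ - (d:ℝ)/p₁ + (d:ℝ)/2 with ha₁
  have hι : Function.Injective (fun k : ℕ => ((k, 0) : ℕ × (Fin d → ℤ))) := by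
    intro k l h; simpa using congrArg Prod.fst h
  set g : ℕ → ℝ := fun k => (2:ℝ)^(-(k:ℝ)*a₁) with hg
  have hs : Summable (fun k : ℕ =>
      |besovWeight d p₀ s₀ w₀ ((fun k : ℕ => ((k, 0) : ℕ × (Fin d → ℤ))) k).1
        ((fun k : ℕ => ((k, 0) : ℕ × (Fin d → ℤ))) k).2 * g k| ^ p₀) := by
    have heq : ∀ k : ℕ, |besovWeight d p₀ s₀ w₀ k 0 * g k| ^ p₀
        = ((2:ℝ)^((a₀-a₁)*p₀))^k := by
      intro k
      rw [hg, besovWeight_zero, ← ha₀, ← Real.rpow_add two_pos,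
        abs_of_pos (Real.rpow_pos_of_pos two_pos _),
        ← Real.rpow_natCast ((2:ℝ)^((a₀-a₁)*p₀)) k,
        ← Real.rpow_mul (by norm_num : (0:ℝ) ≤ 2),
        ← Real.rpow_mul (by norm_num : (0:ℝ) ≤ 2)]
      congr 1; ring
    refine Summable.congr ?_ (fun k => (heq k).symm)
    exact summable_geometric_of_lt_one (Real.rpow_pos_of_pos two_pos _).le
      (Real.rpow_lt_one_of_one_lt_of_neg one_lt_two (by nlinarith))
  have h1 := besov_transfer d p₀ p₁ s₀ s₁ w₀ w₁ hp₀ H _ hι g hs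
  refine not_summable_of_one_le _ (fun k => ?_) h1
  have : |besovWeight d p₁ s₁ w₁ k 0 * g k| ^ p₁ = 1 := by
    rw [hg, besovWeight_zero, ← ha₁, ← Real.rpow_add two_pos]
    have he : (k:ℝ)*a₁ + (-(k:ℝ)*a₁) = 0 := by ring
    rw [he, Real.rpow_zero, abs_one, Real.one_rpow]
  simp only [this]; exact le_refl 1

lemma besov_counter_w (d : ℕ) (hd : 1 ≤ d) (p₀ p₁ s₀ s₁ w₀ w₁ : ℝ)
    (hp₀ : 0 < p₀) (hp₁ : 0 < p₁) (hw : w₀ < w₁)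
    (H : ∀ μ : ℕ × (Fin d → ℤ) → ℝ,
        Summable (fun x => |besovWeight d p₀ s₀ w₀ x.1 x.2 * μ x| ^ p₀) →
        Summable (fun x => |besovWeight d p₁ s₁ w₁ x.1 x.2 * μ x| ^ p₁)) : False := by
  set η := w₁ - w₀ with hη
  have hηpos : 0 < η := by rw [hη]; linarith
  set ι : ℕ → ℕ × (Fin d → ℤ) :=
    fun k => (0, Pi.single (⟨0, hd⟩ : Fin d) ((2:ℤ)^k)) with hι'
  have hι : Function.Injective ι := by
    intro k l h
    have h2 := congrArg (fun x : ℕ × (Fin d → ℤ) => x.2 (⟨0, hd⟩ : Fin d)) h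
    simp only [hι', Pi.single_eq_same] at h2
    exact pow_right_injective₀ (by norm_num) (by norm_num) h2
  set g : ℕ → ℝ := fun k => (1 + ((2:ℝ)^k)^2)^(-(w₀/2)) * (2:ℝ)^(-(k:ℝ)*η) with hg
  have hB : ∀ k : ℕ, (0:ℝ) < 1 + ((2:ℝ)^k)^2 := fun k => by positivity
  have hs : Summable (fun k : ℕ =>
      |besovWeight d p₀ s₀ w₀ (ι k).1 (ι k).2 * g k| ^ p₀) := by
    have heq : ∀ k : ℕ, |besovWeight d p₀ s₀ w₀ (ι k).1 (ι k).2 * g k| ^ p₀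
        = ((2:ℝ)^(-η*p₀))^k := by
      intro k
      have h1 : besovWeight d p₀ s₀ w₀ (ι k).1 (ι k).2 * g k = (2:ℝ)^(-(k:ℝ)*η) := by
        rw [hι']
        simp only
        rw [besovWeight_single d hd, hg]
        simp only
        rw [← mul_assoc, ← Real.rpow_add (hB k), add_neg_cancel, Real.rpow_zero, one_mul]
      rw [h1, abs_of_pos (Real.rpow_pos_of_pos two_pos _),
        ← Real.rpow_natCast ((2:ℝ)^(-η*p₀)) k,
        ← Real.rpow_mul (by norm_num : (0:ℝ) ≤ 2),
        ← Real.rpow_mul (by norm_num : (0:ℝ) ≤ 2)]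
      congr 1; ring
    refine Summable.congr ?_ (fun k => (heq k).symm)
    exact summable_geometric_of_lt_one (Real.rpow_pos_of_pos two_pos _).le
      (Real.rpow_lt_one_of_one_lt_of_neg one_lt_two (by nlinarith))
  have h1 := besov_transfer d p₀ p₁ s₀ s₁ w₀ w₁ hp₀ H _ hι g hs
  refine not_summable_of_one_le _ (fun k => ?_) h1
  have hbase : besovWeight d p₁ s₁ w₁ (ι k).1 (ι k).2 * g k
      = (1 + ((2:ℝ)^k)^2)^(η/2) * (2:ℝ)^(-(k:ℝ)*η) := by
    rw [hι']
    simp only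
    rw [besovWeight_single d hd, hg]
    simp only
    rw [← mul_assoc, ← Real.rpow_add (hB k)]
    congr 2
    rw [hη]; ring
  have hge : (1:ℝ) ≤ (1 + ((2:ℝ)^k)^2)^(η/2) * (2:ℝ)^(-(k:ℝ)*η) := by
    have hpow : ((2:ℝ)^k)^2 = (2:ℝ)^((2*(k:ℝ))) := by
      rw [← pow_mul, ← Real.rpow_natCast 2 (k*2)]
      congr 1; push_cast; ring
    have h2 : (2:ℝ)^((2*(k:ℝ))) ≤ 1 + ((2:ℝ)^k)^2 := by rw [← hpow]; linarith [(hB k)]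
    have h3 : ((2:ℝ)^((2*(k:ℝ))))^(η/2) ≤ (1 + ((2:ℝ)^k)^2)^(η/2) :=
      Real.rpow_le_rpow (Real.rpow_pos_of_pos two_pos _).le h2 (by linarith)
    have h4 : ((2:ℝ)^((2*(k:ℝ))))^(η/2) = (2:ℝ)^((k:ℝ)*η) := by
      rw [← Real.rpow_mul (by norm_num : (0:ℝ) ≤ 2)]
      congr 1; ring
    calc (1:ℝ) = (2:ℝ)^((k:ℝ)*η) * (2:ℝ)^(-(k:ℝ)*η) := by
          rw [← Real.rpow_add two_pos]
          have : (k:ℝ)*η + (-(k:ℝ)*η) = 0 := by ring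
          rw [this, Real.rpow_zero]
      _ ≤ (1 + ((2:ℝ)^k)^2)^(η/2) * (2:ℝ)^(-(k:ℝ)*η) := by
          apply mul_le_mul_of_nonneg_right _ (Real.rpow_pos_of_pos two_pos _).le
          rw [← h4]; exact h3
  rw [hbase, abs_of_pos (by positivity)]
  exact Real.one_le_rpow hge hp₁.le

/-- Continuous embedding of weighted Besov sequence spaces, case `1 < p₀ ≤ p₁`:
the inclusion `b^{p₀}_{s₀,w₀} ⊆ b^{p₁}_{s₁,w₁}` holds iff `s₀ - s₁ ≥ d(1/p₀ - 1/p₁)` and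
`w₀ ≥ w₁`; moreover in that case the inclusion is norm-continuous. -/
theorem besov_embedding_le (d : ℕ) (hd : 1 ≤ d) (p₀ p₁ s₀ s₁ w₀ w₁ : ℝ)
    (hp₀ : 1 < p₀) (hp : p₀ ≤ p₁) :
    ((∀ μ : ℕ × (Fin d → ℤ) → ℝ,
        Summable (fun x => |besovWeight d p₀ s₀ w₀ x.1 x.2 * μ x| ^ p₀) →
        Summable (fun x => |besovWeight d p₁ s₁ w₁ x.1 x.2 * μ x| ^ p₁)) ↔
      ((d : ℝ) * (1 / p₀ - 1 / p₁) ≤ s₀ - s₁ ∧ w₁ ≤ w₀))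
    ∧ (((d : ℝ) * (1 / p₀ - 1 / p₁) ≤ s₀ - s₁ ∧ w₁ ≤ w₀) →
        ∃ C : ℝ, 0 < C ∧ ∀ μ : ℕ × (Fin d → ℤ) → ℝ,
          (∑' x : ℕ × (Fin d → ℤ),
              ENNReal.ofReal (|besovWeight d p₁ s₁ w₁ x.1 x.2 * μ x| ^ p₁)) ^ (1 / p₁)
            ≤ ENNReal.ofReal C *
              (∑' x : ℕ × (Fin d → ℤ),
                ENNReal.ofReal (|besovWeight d p₀ s₀ w₀ x.1 x.2 * μ x| ^ p₀)) ^ (1 / p₀)) := by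
  have hq0 : (0:ℝ) < p₀ := by linarith
  have hq1 : (0:ℝ) < p₁ := by linarith
  constructor
  · constructor
    · intro H
      constructor
      · by_contra hcon
        push_neg at hcon
        refine besov_counter_s d p₀ p₁ s₀ s₁ w₀ w₁ hq0 hq1 ?_ H
        have e0 : (d:ℝ)/p₀ = (d:ℝ) * (1/p₀) := by ring
        have e1 : (d:ℝ)/p₁ = (d:ℝ) * (1/p₁) := by ring
        rw [e0, e1]; nlinarith [hcon]
      · by_contra hcon
        push_neg at hcon
        exact besov_counter_w d hd p₀ p₁ s₀ s₁ w₀ w₁ hq0 hq1 hcon H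
    · rintro ⟨h1, h2⟩ μ hs
      set f := fun x : ℕ × (Fin d → ℤ) => |besovWeight d p₀ s₀ w₀ x.1 x.2 * μ x| ^ p₀ with hf
      have hfnn : ∀ x, 0 ≤ f x := fun x => Real.rpow_nonneg (abs_nonneg _) _
      set M := max (∑' x, f x) 1 with hM
      have hM1 : (1:ℝ) ≤ M := le_max_right _ _
      have hfM : ∀ x, f x ≤ M :=
        fun x => le_trans (Summable.le_tsum hs x fun j _ => hfnn j) (le_max_left _ _)
      have key : ∀ x, |besovWeight d p₁ s₁ w₁ x.1 x.2 * μ x| ^ p₁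
          ≤ M ^ (p₁/p₀ - 1) * f x := by
        intro x
        have hle : |besovWeight d p₁ s₁ w₁ x.1 x.2 * μ x|
            ≤ |besovWeight d p₀ s₀ w₀ x.1 x.2 * μ x| := by
          rw [abs_mul, abs_mul]
          refine mul_le_mul_of_nonneg_right ?_ (abs_nonneg _)
          rw [abs_of_pos (besovWeight_pos d p₁ s₁ w₁ x.1 x.2),
            abs_of_pos (besovWeight_pos d p₀ s₀ w₀ x.1 x.2)]
          exact besovWeight_mono d p₀ p₁ s₀ s₁ w₀ w₁ hq0 hq1 h1 h2 x.1 x.2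
        have hd1 : (0:ℝ) ≤ p₁/p₀ - 1 := by
          rw [sub_nonneg, le_div_iff₀ hq0, one_mul]; exact hp
        calc |besovWeight d p₁ s₁ w₁ x.1 x.2 * μ x| ^ p₁
            ≤ |besovWeight d p₀ s₀ w₀ x.1 x.2 * μ x| ^ p₁ :=
              Real.rpow_le_rpow (abs_nonneg _) hle hq1.le
          _ = (f x) ^ (p₁/p₀) := by
              rw [hf]
              simp only
              rw [← Real.rpow_mul (abs_nonneg _)]
              congr 1
              field_simp
          _ = (f x) ^ (p₁/p₀ - 1) * f x := by
              rw [show p₁/p₀ = (p₁/p₀ - 1) + 1 by ring,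
                Real.rpow_add_of_nonneg (hfnn x) hd1 zero_le_one, Real.rpow_one]
              ring_nf
          _ ≤ M ^ (p₁/p₀ - 1) * f x :=
              mul_le_mul_of_nonneg_right
                (Real.rpow_le_rpow (hfnn x) (hfM x) hd1) (hfnn x)
      exact Summable.of_nonneg_of_le (fun x => Real.rpow_nonneg (abs_nonneg _) _) key
        (hs.mul_left _)
  · rintro ⟨h1, h2⟩
    refine ⟨1, one_pos, fun μ => ?_⟩
    set a := fun x : ℕ × (Fin d → ℤ) =>
      ENNReal.ofReal |besovWeight d p₀ s₀ w₀ x.1 x.2 * μ x| with haa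
    have step1 : (∑' x, ENNReal.ofReal (|besovWeight d p₁ s₁ w₁ x.1 x.2 * μ x| ^ p₁))
        ≤ ∑' x, a x ^ p₁ := by
      refine ENNReal.tsum_le_tsum fun x => ?_
      have hle : |besovWeight d p₁ s₁ w₁ x.1 x.2 * μ x|
          ≤ |besovWeight d p₀ s₀ w₀ x.1 x.2 * μ x| := by
        rw [abs_mul, abs_mul]
        refine mul_le_mul_of_nonneg_right ?_ (abs_nonneg _)
        rw [abs_of_pos (besovWeight_pos d p₁ s₁ w₁ x.1 x.2),
          abs_of_pos (besovWeight_pos d p₀ s₀ w₀ x.1 x.2)]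
        exact besovWeight_mono d p₀ p₁ s₀ s₁ w₀ w₁ hq0 hq1 h1 h2 x.1 x.2
      rw [← ENNReal.ofReal_rpow_of_nonneg (abs_nonneg _) hq1.le]
      exact ENNReal.rpow_le_rpow (ENNReal.ofReal_le_ofReal hle) hq1.le
    have step3 : (∑' x, a x ^ p₀)
        = ∑' x, ENNReal.ofReal (|besovWeight d p₀ s₀ w₀ x.1 x.2 * μ x| ^ p₀) := by
      refine tsum_congr fun x => ?_
      rw [← ENNReal.ofReal_rpow_of_nonneg (abs_nonneg _) hq0.le]
    calc (∑' x, ENNReal.ofReal (|besovWeight d p₁ s₁ w₁ x.1 x.2 * μ x| ^ p₁)) ^ (1/p₁)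
        ≤ (∑' x, a x ^ p₁) ^ (1/p₁) := ENNReal.rpow_le_rpow step1 (by positivity)
      _ ≤ (∑' x, a x ^ p₀) ^ (1/p₀) := lp_mono_ennreal a p₀ p₁ hq0 hp
      _ = ENNReal.ofReal 1 *
          (∑' x, ENNReal.ofReal (|besovWeight d p₀ s₀ w₀ x.1 x.2 * μ x| ^ p₀)) ^ (1/p₀) := by
          rw [step3, ENNReal.ofReal_one, one_mul]
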